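/- arXiv:2405.08009 — 8 statements merged into one kernel-verified Lean document; each statement's English description precedes it below -/
import Mathlib

section
/- Let (G, ‖·‖) be a Banach space and R : G → G an enriched interpolative Matkowski mapping with constants a, b, c ∈ (0,1), a+b+c < 1, k ∈ [0,∞), and comparison function ζ. Then R has a fixed point s ∈ G, and for λ = 1/(k+1) the Krasnoselskij iteration p_{m+1} = (1−λ)p_m + λ R(p_m) converges to a fixed point of R for every initial point p_0 ∈ G. -/
open Filter

theorem zeta_lt' {ζ : ℝ → ℝ}
    (hζmono : ∀ s t : ℝ, 0 ≤ s → s ≤ t → ζ s ≤ ζ t)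
    (hζiter : ∀ t : ℝ, 0 < t → Tendsto (fun n => ζ^[n] t) atTop (nhds 0))
    {t : ℝ} (ht : 0 < t) : ζ t < t := by
  by_contra h
  push_neg at h
  have key : ∀ n, t ≤ ζ^[n] t := by
    intro n
    induction n with
    | zero => simp
    | succ n ih =>
      rw [Function.iterate_succ_apply']
      exact le_trans h (hζmono t _ ht.le ih)
  have := le_of_tendsto_of_tendsto (tendsto_const_nhds (x := t) (f := atTop))
    (hζiter t ht) (Eventually.of_forall key)
  linarith

theorem zeta_le' {ζ : ℝ → ℝ}
    (hζnonneg : ∀ t : ℝ, 0 ≤ t → 0 ≤ ζ t)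
    (hζmono : ∀ s t : ℝ, 0 ≤ s → s ≤ t → ζ s ≤ ζ t)
    (hζiter : ∀ t : ℝ, 0 < t → Tendsto (fun n => ζ^[n] t) atTop (nhds 0))
    {t : ℝ} (ht : 0 ≤ t) : ζ t ≤ t := by
  rcases ht.eq_or_lt with h | h
  · rw [← h]
    by_contra hpos
    push_neg at hpos
    have h0 : (0:ℝ) ≤ ζ 0 := hζnonneg 0 le_rfl
    have h1 : ζ (ζ 0) < ζ 0 := zeta_lt' hζmono hζiter hpos
    have h2 : ζ 0 ≤ ζ (ζ 0) := hζmono 0 (ζ 0) le_rfl h0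
    linarith
  · exact (zeta_lt' hζmono hζiter h).le

theorem matkowski_main {G : Type*} [NormedAddCommGroup G] [NormedSpace ℝ G] [CompleteSpace G]
    (R : G → G) (a b c k : ℝ) (ζ : ℝ → ℝ)
    (ha : a ∈ Set.Ioo (0:ℝ) 1) (hb : b ∈ Set.Ioo (0:ℝ) 1) (hc : c ∈ Set.Ioo (0:ℝ) 1)
    (habc : a + b + c < 1) (hk : 0 ≤ k)
    (hζnonneg : ∀ t : ℝ, 0 ≤ t → 0 ≤ ζ t)
    (hζmono : ∀ s t : ℝ, 0 ≤ s → s ≤ t → ζ s ≤ ζ t)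
    (hζiter : ∀ t : ℝ, 0 < t → Tendsto (fun n => ζ^[n] t) atTop (nhds 0))
    (hR : ∀ p q : G, R p ≠ p → R q ≠ q →
      ‖k • (p - q) + R p - R q‖ ≤
        ζ (‖(k + 1) • (p - q)‖ ^ b * ‖p - R p‖ ^ a * ‖q - R q‖ ^ c *
          ((1 / 2) * (‖(k + 1) • (p - q) + q - R q‖ + ‖(k + 1) • (q - p) + p - R p‖)) ^
            (1 - a - b - c)))
    (p₀ : G) :
    ∃ s : G, R s = s ∧
        Tendsto (fun m => (fun p => (1 - 1 / (k + 1)) • p + (1 / (k + 1)) • R p)^[m] p₀)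
          atTop (nhds s) := by
  have hK : (0:ℝ) < k + 1 := by linarith
  have hK0 : (k+1) ≠ 0 := ne_of_gt hK
  have hK1 : (1:ℝ) ≤ k + 1 := by linarith
  have he : 0 < 1 - a - b - c := by linarith
  set T : G → G := fun p => (1 - 1 / (k + 1)) • p + (1 / (k + 1)) • R p with hTdef
  have hA1 : ∀ p q, k • (p - q) + R p - R q = (k+1) • (T p - T q) := by
    intro p q; simp only [hTdef]; match_scalars <;> field_simp <;> ring
  have hA2 : ∀ p, p - R p = (k+1) • (p - T p) := by
    intro p; simp only [hTdef]; match_scalars <;> field_simp <;> ring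
  have hA3 : ∀ p q, (k+1) • (p - q) + q - R q = (k+1) • (p - T q) := by
    intro p q; simp only [hTdef]; match_scalars <;> field_simp <;> ring
  have hTfix : ∀ p, T p = p → R p = p := by
    intro p hp
    have h := hA2 p
    rw [hp, sub_self, smul_zero, sub_eq_zero] at h
    exact h.symm
  have hTfix' : ∀ p, R p = p → T p = p := by
    intro p hp
    simp only [hTdef, hp, ← add_smul]
    norm_num
  have hnorm0 : ∀ v : G, ‖(k+1) • v‖ = (k+1) * ‖v‖ := by
    intro v; rw [norm_smul, Real.norm_of_nonneg hK.le]
  have hnorm1 : ∀ p q, ‖k • (p - q) + R p - R q‖ = (k+1) * ‖T p - T q‖ := by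
    intro p q; rw [hA1, hnorm0]
  have hnorm2 : ∀ p, ‖p - R p‖ = (k+1) * ‖p - T p‖ := by
    intro p; rw [hA2, hnorm0]
  have hnorm3 : ∀ p q, ‖(k+1) • (p - q) + q - R q‖ = (k+1) * ‖p - T q‖ := by
    intro p q; rw [hA3, hnorm0]
  set u : ℕ → G := fun n => T^[n] p₀ with hudef
  have hu : ∀ n, u (n+1) = T (u n) := fun n => Function.iterate_succ_apply' T n p₀
  by_cases hfix : ∃ m, R (u m) = u m
  · obtain ⟨m, hm⟩ := hfix
    refine ⟨u m, hm, ?_⟩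
    have hconst : ∀ n, m ≤ n → u n = u m := by
      intro n hn
      induction n, hn using Nat.le_induction with
      | base => rfl
      | succ n hn ih => rw [hu, ih]; exact hTfix' _ hm
    exact tendsto_atTop_of_eventually_const hconst
  · push_neg at hfix
    set D : ℕ → ℝ := fun n => (k+1) * ‖u n - u (n+1)‖ with hDdef
    have hDpos : ∀ n, 0 < D n := by
      intro n
      have : u n ≠ u (n+1) := by
        intro h
        exact hfix n (hTfix _ ((hu n ▸ h.symm : T (u n) = u n)))
      have : 0 < ‖u n - u (n+1)‖ := by
        rw [norm_pos_iff, sub_ne_zero]; exact this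
      positivity
    have htri : ∀ x y z : G, ‖x - z‖ ≤ ‖x - y‖ + ‖y - z‖ := by
      intro x y z
      simpa [dist_eq_norm] using dist_triangle x y z
    have step : ∀ n m : ℕ, (k+1) * ‖u (n+1) - u (m+1)‖ ≤
        ζ (((k+1) * ‖u n - u m‖) ^ b * (D n) ^ a * (D m) ^ c *
          ((1/2) * ((k+1) * ‖u n - u (m+1)‖ + (k+1) * ‖u m - u (n+1)‖)) ^ (1-a-b-c)) := by
      intro n m
      have h := hR (u n) (u m) (hfix n) (hfix m)
      rw [hnorm1, hnorm0, hnorm2, hnorm2, hnorm3, hnorm3] at h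
      simp only [← hu] at h
      exact h
    -- nonnegativity and product helpers
    have hDnn : ∀ n, 0 ≤ D n := fun n => (hDpos n).le
    have prodnn : ∀ w x y z : ℝ, 0 ≤ w → 0 ≤ x → 0 ≤ y → 0 ≤ z →
        0 ≤ w ^ b * x ^ a * y ^ c * z ^ (1-a-b-c) := by
      intro w x y z hw hx hy hz
      exact mul_nonneg (mul_nonneg (mul_nonneg (Real.rpow_nonneg hw b)
        (Real.rpow_nonneg hx a)) (Real.rpow_nonneg hy c)) (Real.rpow_nonneg hz _)
    have prodmono : ∀ w x y z w' x' y' z' : ℝ, 0 ≤ w → 0 ≤ x → 0 ≤ y → 0 ≤ z →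
        w ≤ w' → x ≤ x' → y ≤ y' → z ≤ z' →
        w ^ b * x ^ a * y ^ c * z ^ (1-a-b-c) ≤ w' ^ b * x' ^ a * y' ^ c * z' ^ (1-a-b-c) := by
      intro w x y z w' x' y' z' hw hx hy hz hw' hx' hy' hz'
      have f1 : w ^ b ≤ w' ^ b := Real.rpow_le_rpow hw hw' hb.1.le
      have f2 : x ^ a ≤ x' ^ a := Real.rpow_le_rpow hx hx' ha.1.le
      have f3 : y ^ c ≤ y' ^ c := Real.rpow_le_rpow hy hy' hc.1.le
      have f4 : z ^ (1-a-b-c) ≤ z' ^ (1-a-b-c) := Real.rpow_le_rpow hz hz' he.le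
      have n1 : 0 ≤ w' ^ b := Real.rpow_nonneg (hw.trans hw') b
      have n2 : 0 ≤ x ^ a := Real.rpow_nonneg hx a
      have n3 : 0 ≤ x' ^ a := Real.rpow_nonneg (hx.trans hx') a
      have n4 : 0 ≤ y ^ c := Real.rpow_nonneg hy c
      have n5 : 0 ≤ y' ^ c := Real.rpow_nonneg (hy.trans hy') c
      have n6 : 0 ≤ z ^ (1-a-b-c) := Real.rpow_nonneg hz _
      exact mul_le_mul (mul_le_mul (mul_le_mul f1 f2 n2 n1) f3 n4 (mul_nonneg n1 n3))
        f4 n6 (mul_nonneg (mul_nonneg n1 n3) n5)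
    have hpow : ∀ x : ℝ, 0 < x → x ^ b * x ^ a * x ^ c * x ^ (1-a-b-c) = x := by
      intro x hx
      rw [← Real.rpow_add hx, ← Real.rpow_add hx, ← Real.rpow_add hx,
        show b + a + c + (1-a-b-c) = 1 by ring, Real.rpow_one]
    have prodbound : ∀ w x y z X : ℝ, 0 ≤ w → 0 ≤ x → 0 ≤ y → 0 ≤ z → 0 < X →
        w ≤ X → x ≤ X → y ≤ X → z ≤ X →
        w ^ b * x ^ a * y ^ c * z ^ (1-a-b-c) ≤ X := by
      intro w x y z X hw hx hy hz hX h1 h2 h3 h4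
      calc w ^ b * x ^ a * y ^ c * z ^ (1-a-b-c)
          ≤ X ^ b * X ^ a * X ^ c * X ^ (1-a-b-c) :=
            prodmono _ _ _ _ _ _ _ _ hw hx hy hz h1 h2 h3 h4
        _ = X := hpow X hX
    -- bound on the "half" term for consecutive iterates
    have hhalf : ∀ n, (1/2) * ((k+1) * ‖u n - u (n+1+1)‖ + (k+1) * ‖u (n+1) - u (n+1)‖) ≤
        (1/2) * (D n + D (n+1)) := by
      intro n
      have h1 := htri (u n) (u (n+1)) (u (n+1+1))
      have h2 := mul_le_mul_of_nonneg_left h1 hK.le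
      have g1 : (k+1) * ‖u n - u (n+1)‖ = D n := rfl
      have g2 : (k+1) * ‖u (n+1) - u (n+1+1)‖ = D (n+1) := rfl
      simp only [sub_self, norm_zero, mul_zero, add_zero]
      nlinarith [h2]
    have hznn : ∀ n m : ℕ,
        (0:ℝ) ≤ (1/2) * ((k+1) * ‖u n - u (m+1)‖ + (k+1) * ‖u m - u (n+1)‖) := by
      intro n m
      have := norm_nonneg (u n - u (m+1))
      have := norm_nonneg (u m - u (n+1))
      nlinarith
    have hwnn : ∀ n m : ℕ, (0:ℝ) ≤ (k+1) * ‖u n - u m‖ := by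
      intro n m
      have := norm_nonneg (u n - u m)
      positivity
    -- D is decreasing
    have Ddec : ∀ n, D (n+1) ≤ D n := by
      intro n
      by_contra hlt
      push_neg at hlt
      have h := step n (n+1)
      have harg : ((k+1) * ‖u n - u (n+1)‖) ^ b * (D n) ^ a * (D (n+1)) ^ c *
          ((1/2) * ((k+1) * ‖u n - u (n+1+1)‖ + (k+1) * ‖u (n+1) - u (n+1)‖)) ^ (1-a-b-c)
          ≤ D (n+1) := by
        apply prodbound _ _ _ _ _ (hDnn n) (hDnn n) (hDnn (n+1)) (hznn n (n+1)) (hDpos (n+1))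
        · exact hlt.le
        · exact hlt.le
        · exact le_rfl
        · exact le_trans (hhalf n) (by linarith)
      have hfinal : D (n+1) ≤ ζ (D (n+1)) :=
        le_trans h (hζmono _ _ (prodnn _ _ _ _ (hDnn n) (hDnn n) (hDnn (n+1)) (hznn n (n+1))) harg)
      exact absurd hfinal (not_le.mpr (zeta_lt' hζmono hζiter (hDpos (n+1))))
    have Dante : Antitone D := antitone_nat_of_succ_le Ddec
    -- D (n+1) ≤ ζ (D n)
    have Dzeta : ∀ n, D (n+1) ≤ ζ (D n) := by
      intro n
      have h := step n (n+1)
      have harg : ((k+1) * ‖u n - u (n+1)‖) ^ b * (D n) ^ a * (D (n+1)) ^ c *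
          ((1/2) * ((k+1) * ‖u n - u (n+1+1)‖ + (k+1) * ‖u (n+1) - u (n+1)‖)) ^ (1-a-b-c)
          ≤ D n := by
        apply prodbound _ _ _ _ _ (hDnn n) (hDnn n) (hDnn (n+1)) (hznn n (n+1)) (hDpos n)
        · exact le_rfl
        · exact le_rfl
        · exact Ddec n
        · exact le_trans (hhalf n) (by nlinarith [Ddec n])
      exact le_trans h (hζmono _ _ (prodnn _ _ _ _ (hDnn n) (hDnn n) (hDnn (n+1)) (hznn n (n+1))) harg)
    -- D tends to 0
    have Diter : ∀ n, D n ≤ ζ^[n] (D 0) := by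
      intro n
      induction n with
      | zero => simp
      | succ n ih =>
        rw [Function.iterate_succ_apply']
        exact le_trans (Dzeta n) (hζmono _ _ (hDnn n) ih)
    have Dtend : Tendsto D atTop (nhds 0) :=
      tendsto_of_tendsto_of_tendsto_of_le_of_le tendsto_const_nhds (hζiter _ (hDpos 0))
        hDnn Diter
    -- u is Cauchy
    have hucauchy : CauchySeq u := by
      rw [Metric.cauchySeq_iff']
      intro eps heps
      set E : ℝ := (k+1) * (eps/2) with hEdef
      have hE : 0 < E := by positivity
      have hzE : ζ E < E := zeta_lt' hζmono hζiter hE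
      have ev1 : ∀ᶠ N in atTop, D N < E - ζ E := Dtend.eventually_lt_const (by linarith)
      have ev2 : ∀ᶠ N in atTop, E ^ b * (D N) ^ a * (D N) ^ c *
          ((1/2) * ((E + D N) + (E + D N))) ^ (1-a-b-c) < E := by
        have t1 : Tendsto (fun N => (D N) ^ a) atTop (nhds 0) := by
          have := (Real.continuousAt_rpow_const 0 a (Or.inr ha.1.le)).tendsto.comp Dtend
          simpa [Function.comp_def, Real.zero_rpow (ne_of_gt ha.1)] using this
        have t2 : Tendsto (fun N => (D N) ^ c) atTop (nhds 0) := by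
          have := (Real.continuousAt_rpow_const 0 c (Or.inr hc.1.le)).tendsto.comp Dtend
          simpa [Function.comp_def, Real.zero_rpow (ne_of_gt hc.1)] using this
        have hbase : Tendsto (fun N => (1/2) * ((E + D N) + (E + D N))) atTop (nhds E) := by
          have h1 : Tendsto (fun N => E + D N) atTop (nhds (E + 0)) :=
            tendsto_const_nhds.add Dtend
          have h2 := ((h1.add h1).const_mul (1/2 : ℝ))
          have : (1/2 : ℝ) * ((E + 0) + (E + 0)) = E := by ring
          rwa [this] at h2
        have t3 : Tendsto (fun N => ((1/2) * ((E + D N) + (E + D N))) ^ (1-a-b-c))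
            atTop (nhds (E ^ (1-a-b-c))) :=
          (Real.continuousAt_rpow_const E (1-a-b-c) (Or.inl (ne_of_gt hE))).tendsto.comp hbase
        have hconv := (((tendsto_const_nhds (x := E ^ b) (f := atTop)).mul t1).mul t2).mul t3
        rw [show E ^ b * 0 * 0 * E ^ (1-a-b-c) = 0 by ring] at hconv
        exact hconv.eventually_lt_const hE
      obtain ⟨N, hN1, hN2⟩ := (ev1.and ev2).exists
      have key : ∀ n, N ≤ n → (k+1) * ‖u n - u N‖ ≤ E := by
        intro n hn
        induction n, hn using Nat.le_induction with
        | base => rw [sub_self, norm_zero, mul_zero]; exact hE.le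
        | succ n hn ih =>
          have h := step n N
          have harg : ((k+1) * ‖u n - u N‖) ^ b * (D n) ^ a * (D N) ^ c *
              ((1/2) * ((k+1) * ‖u n - u (N+1)‖ + (k+1) * ‖u N - u (n+1)‖)) ^ (1-a-b-c)
              ≤ E ^ b * (D N) ^ a * (D N) ^ c * ((1/2) * ((E + D N) + (E + D N))) ^ (1-a-b-c) := by
            apply prodmono _ _ _ _ _ _ _ _ (hwnn n N) (hDnn n) (hDnn N) (hznn n N) ih
              (Dante hn) le_rfl
            have g1 := htri (u n) (u N) (u (N+1))
            have g2 := htri (u N) (u n) (u (n+1))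
            have g3 : ‖u N - u n‖ = ‖u n - u N‖ := norm_sub_rev _ _
            have g4 : (k+1) * ‖u n - u (n+1)‖ = D n := rfl
            have g5 : (k+1) * ‖u N - u (N+1)‖ = D N := rfl
            have g6 := mul_le_mul_of_nonneg_left g1 hK.le
            have g7 := mul_le_mul_of_nonneg_left g2 hK.le
            have g8 : D n ≤ D N := Dante hn
            rw [g3] at g7
            rw [mul_add] at g6 g7
            linarith [g6, g7, ih, g8, g4, g5]
          have harg2 : ((k+1) * ‖u n - u N‖) ^ b * (D n) ^ a * (D N) ^ c *
              ((1/2) * ((k+1) * ‖u n - u (N+1)‖ + (k+1) * ‖u N - u (n+1)‖)) ^ (1-a-b-c) ≤ E :=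
            le_trans harg hN2.le
          have h2 : (k+1) * ‖u (n+1) - u (N+1)‖ ≤ ζ E :=
            le_trans h (hζmono _ _ (prodnn _ _ _ _ (hwnn n N) (hDnn n) (hDnn N) (hznn n N)) harg2)
          have g := htri (u (n+1)) (u (N+1)) (u N)
          have g9 := mul_le_mul_of_nonneg_left g hK.le
          have g10 : ‖u (N+1) - u N‖ = ‖u N - u (N+1)‖ := norm_sub_rev _ _
          have g11 : (k+1) * ‖u N - u (N+1)‖ = D N := rfl
          rw [g10] at g9
          rw [mul_add] at g9
          linarith [g9, h2, hN1, g11]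
      refine ⟨N, fun n hn => ?_⟩
      rw [dist_eq_norm]
      have hkey := key n hn
      have h' : (k+1) * ‖u n - u N‖ ≤ (k+1) * (eps/2) := hkey
      have := le_of_mul_le_mul_left h' hK
      linarith
    obtain ⟨s, hs⟩ := cauchySeq_tendsto_of_complete hucauchy
    have hshift : Tendsto (fun n => u (n+1)) atTop (nhds s) :=
      hs.comp (tendsto_add_atTop_nat 1)
    have hRs : R s = s := by
      by_contra hRs
      have hTs : T s ≠ s := fun h => hRs (hTfix s h)
      have hTsn : 0 < ‖s - T s‖ := by
        rw [norm_pos_iff, sub_ne_zero]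
        exact fun h => hTs h.symm
      have happ : ∀ n, (k+1) * ‖u (n+1) - T s‖ ≤
          ζ (((k+1) * ‖u n - s‖) ^ b * ((k+1) * ‖u n - u (n+1)‖) ^ a * ((k+1) * ‖s - T s‖) ^ c *
            ((1/2) * ((k+1) * ‖u n - T s‖ + (k+1) * ‖s - u (n+1)‖)) ^ (1-a-b-c)) := by
        intro n
        have h := hR (u n) s (hfix n) hRs
        rw [hnorm1, hnorm0, hnorm2, hnorm2, hnorm3, hnorm3] at h
        simp only [← hu] at h
        exact h
      -- the argument tends to 0
      have hdist : Tendsto (fun n => ‖u n - s‖) atTop (nhds 0) := by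
        have := tendsto_iff_norm_sub_tendsto_zero.mp hs
        exact this
      have t0 : Tendsto (fun n => (k+1) * ‖u n - s‖) atTop (nhds 0) := by
        have := hdist.const_mul (k+1)
        simpa using this
      have t1 : Tendsto (fun n => ((k+1) * ‖u n - s‖) ^ b) atTop (nhds 0) := by
        have := (Real.continuousAt_rpow_const 0 b (Or.inr hb.1.le)).tendsto.comp t0
        simpa [Function.comp_def, Real.zero_rpow (ne_of_gt hb.1)] using this
      have t2 : Tendsto (fun n => ((k+1) * ‖u n - u (n+1)‖) ^ a) atTop (nhds 0) := by
        have := (Real.continuousAt_rpow_const 0 a (Or.inr ha.1.le)).tendsto.comp Dtend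
        simpa [Function.comp_def, Real.zero_rpow (ne_of_gt ha.1)] using this
      have hb1 : Tendsto (fun n => (k+1) * ‖u n - T s‖) atTop (nhds ((k+1) * ‖s - T s‖)) := by
        have h1 : Tendsto (fun n => u n - T s) atTop (nhds (s - T s)) := hs.sub_const (T s)
        have := (h1.norm).const_mul (k+1)
        simpa using this
      have hb2 : Tendsto (fun n => (k+1) * ‖s - u (n+1)‖) atTop (nhds 0) := by
        have h1 : Tendsto (fun n => s - u (n+1)) atTop (nhds (s - s)) :=
          tendsto_const_nhds.sub hshift
        have := (h1.norm).const_mul (k+1)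
        simpa using this
      have hbase : Tendsto (fun n => (1/2) * ((k+1) * ‖u n - T s‖ + (k+1) * ‖s - u (n+1)‖))
          atTop (nhds ((1/2) * ((k+1) * ‖s - T s‖))) := by
        have := (hb1.add hb2).const_mul (1/2 : ℝ)
        simpa using this
      have hβ : (0:ℝ) < (1/2) * ((k+1) * ‖s - T s‖) := by positivity
      have t4 : Tendsto (fun n => ((1/2) * ((k+1) * ‖u n - T s‖ + (k+1) * ‖s - u (n+1)‖))
          ^ (1-a-b-c)) atTop (nhds (((1/2) * ((k+1) * ‖s - T s‖)) ^ (1-a-b-c))) :=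
        (Real.continuousAt_rpow_const _ (1-a-b-c) (Or.inl (ne_of_gt hβ))).tendsto.comp hbase
      have hXtend : Tendsto (fun n => ((k+1) * ‖u n - s‖) ^ b * ((k+1) * ‖u n - u (n+1)‖) ^ a *
          ((k+1) * ‖s - T s‖) ^ c *
          ((1/2) * ((k+1) * ‖u n - T s‖ + (k+1) * ‖s - u (n+1)‖)) ^ (1-a-b-c))
          atTop (nhds 0) := by
        have := ((t1.mul t2).mul (tendsto_const_nhds (x := ((k+1) * ‖s - T s‖) ^ c)
          (f := atTop))).mul t4
        rw [show (0:ℝ) * 0 * ((k+1) * ‖s - T s‖) ^ c *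
          (((1/2) * ((k+1) * ‖s - T s‖)) ^ (1-a-b-c)) = 0 by ring] at this
        exact this
      have hbound : ∀ n, ‖u (n+1) - T s‖ ≤
          ((k+1) * ‖u n - s‖) ^ b * ((k+1) * ‖u n - u (n+1)‖) ^ a * ((k+1) * ‖s - T s‖) ^ c *
          ((1/2) * ((k+1) * ‖u n - T s‖ + (k+1) * ‖s - u (n+1)‖)) ^ (1-a-b-c) := by
        intro n
        have hXnn : (0:ℝ) ≤ ((k+1) * ‖u n - s‖) ^ b * ((k+1) * ‖u n - u (n+1)‖) ^ a *
            ((k+1) * ‖s - T s‖) ^ c *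
            ((1/2) * ((k+1) * ‖u n - T s‖ + (k+1) * ‖s - u (n+1)‖)) ^ (1-a-b-c) := by
          apply prodnn
          · exact mul_nonneg hK.le (norm_nonneg _)
          · exact mul_nonneg hK.le (norm_nonneg _)
          · exact mul_nonneg hK.le (norm_nonneg _)
          · have := norm_nonneg (u n - T s)
            have := norm_nonneg (s - u (n+1))
            nlinarith
        have h1 := happ n
        have h2 := zeta_le' hζnonneg hζmono hζiter hXnn
        have h3 : ‖u (n+1) - T s‖ ≤ (k+1) * ‖u (n+1) - T s‖ := by
          nlinarith [norm_nonneg (u (n+1) - T s)]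
        linarith
      have hTo : Tendsto (fun n => ‖u (n+1) - T s‖) atTop (nhds 0) :=
        tendsto_of_tendsto_of_tendsto_of_le_of_le tendsto_const_nhds hXtend
          (fun n => norm_nonneg _) hbound
      have hToTs : Tendsto (fun n => u (n+1)) atTop (nhds (T s)) :=
        tendsto_iff_norm_sub_tendsto_zero.mpr hTo
      exact hTs (tendsto_nhds_unique hToTs hshift)
    exact ⟨s, hRs, hs⟩



theorem stmt_2 {G : Type*} [NormedAddCommGroup G] [NormedSpace ℝ G] [CompleteSpace G]
    (R : G → G) (a b c k : ℝ) (ζ : ℝ → ℝ)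
    (ha : a ∈ Set.Ioo (0:ℝ) 1) (hb : b ∈ Set.Ioo (0:ℝ) 1) (hc : c ∈ Set.Ioo (0:ℝ) 1)
    (habc : a + b + c < 1) (hk : 0 ≤ k)
    (hζnonneg : ∀ t : ℝ, 0 ≤ t → 0 ≤ ζ t)
    (hζmono : ∀ s t : ℝ, 0 ≤ s → s ≤ t → ζ s ≤ ζ t)
    (hζiter : ∀ t : ℝ, 0 < t → Tendsto (fun n => ζ^[n] t) atTop (nhds 0))
    (hR : ∀ p q : G, R p ≠ p → R q ≠ q →
      ‖k • (p - q) + R p - R q‖ ≤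
        ζ (‖(k + 1) • (p - q)‖ ^ b * ‖p - R p‖ ^ a * ‖q - R q‖ ^ c *
          ((1 / 2) * (‖(k + 1) • (p - q) + q - R q‖ + ‖(k + 1) • (q - p) + p - R p‖)) ^
            (1 - a - b - c))) :
    (∃ s : G, R s = s) ∧
      ∀ p₀ : G, ∃ s : G, R s = s ∧
        Tendsto (fun m => (fun p => (1 - 1 / (k + 1)) • p + (1 / (k + 1)) • R p)^[m] p₀)
          atTop (nhds s) := by
  constructor
  · obtain ⟨s, hs, -⟩ := matkowski_main R a b c k ζ ha hb hc habc hk hζnonneg hζmono hζiter hR 0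
    exact ⟨s, hs⟩
  · exact matkowski_main R a b c k ζ ha hb hc habc hk hζnonneg hζmono hζiter hR
end

section
/- Let (G, ‖·‖) be a Banach space and R : G → G an enriched interpolative Matkowski mapping with constants k ≥ 0 and a,b,c ∈ (0,1), a+b+c<1. Set λ = 1/(k+1) and R_λ(p) = (1−λ)p + λR(p). Then R_λ satisfies the (un-enriched) interpolative Matkowski condition with modified comparison function t ↦ λ·ζ(t/λ): for all p, q not fixed points of R_λ, ‖R_λ p − R_λ q‖ ≤ λ ζ( (1/λ) ‖p−q‖^b ‖p − R_λ p‖^a ‖q − R_λ q‖^c ( (1/2)(‖p − R_λ q‖ + ‖q − R_λ p‖) )^{1−a−b−c} ). -/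
open Filter

theorem stmt_3 {G : Type*} [NormedAddCommGroup G] [NormedSpace ℝ G] [CompleteSpace G]
    (R : G → G) (a b c k : ℝ) (ζ : ℝ → ℝ)
    (ha : a ∈ Set.Ioo (0:ℝ) 1) (hb : b ∈ Set.Ioo (0:ℝ) 1) (hc : c ∈ Set.Ioo (0:ℝ) 1)
    (habc : a + b + c < 1) (hk : 0 ≤ k)
    (hζnonneg : ∀ t : ℝ, 0 ≤ t → 0 ≤ ζ t)
    (hζmono : ∀ s t : ℝ, 0 ≤ s → s ≤ t → ζ s ≤ ζ t)
    (hζiter : ∀ t : ℝ, 0 < t → Tendsto (fun n => ζ^[n] t) atTop (nhds 0))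
    (hR : ∀ p q : G, R p ≠ p → R q ≠ q →
      ‖k • (p - q) + R p - R q‖ ≤
        ζ (‖(k + 1) • (p - q)‖ ^ b * ‖p - R p‖ ^ a * ‖q - R q‖ ^ c *
          ((1 / 2) * (‖(k + 1) • (p - q) + q - R q‖ + ‖(k + 1) • (q - p) + p - R p‖)) ^
            (1 - a - b - c)))
    (lam : ℝ) (hlam : lam = 1 / (k + 1))
    (Rl : G → G) (hRl : ∀ p, Rl p = (1 - lam) • p + lam • R p) :
    ∀ p q : G, Rl p ≠ p → Rl q ≠ q →
      ‖Rl p - Rl q‖ ≤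
        lam * ζ ((1 / lam) * (‖p - q‖ ^ b * ‖p - Rl p‖ ^ a * ‖q - Rl q‖ ^ c *
          ((1 / 2) * (‖p - Rl q‖ + ‖q - Rl p‖)) ^ (1 - a - b - c))) := by
  intro p q hp hq
  have hμ : (0:ℝ) < k + 1 := by linarith
  have hlam0 : 0 < lam := by rw [hlam]; positivity
  have hinv : 1 / lam = k + 1 := by rw [hlam]; field_simp
  have hp' : R p ≠ p := by
    intro h; apply hp; rw [hRl, h, ← add_smul]; simp
  have hq' : R q ≠ q := by
    intro h; apply hq; rw [hRl, h, ← add_smul]; simp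
  have e1 : Rl p - Rl q = lam • (k • (p - q) + R p - R q) := by
    rw [hRl, hRl, hlam]; match_scalars <;> field_simp <;> ring
  have e2 : p - R p = (k + 1) • (p - Rl p) := by
    rw [hRl, hlam]; match_scalars <;> field_simp <;> ring
  have e3 : q - R q = (k + 1) • (q - Rl q) := by
    rw [hRl, hlam]; match_scalars <;> field_simp <;> ring
  have e4 : (k + 1) • (p - q) + q - R q = (k + 1) • (p - Rl q) := by
    rw [hRl, hlam]; match_scalars <;> field_simp <;> ring
  have e5 : (k + 1) • (q - p) + p - R p = (k + 1) • (q - Rl p) := by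
    rw [hRl, hlam]; match_scalars <;> field_simp <;> ring
  have hA : ‖(k + 1) • (p - q)‖ = (k + 1) * ‖p - q‖ := by
    rw [norm_smul, Real.norm_eq_abs, abs_of_pos hμ]
  have hB : ‖p - R p‖ = (k + 1) * ‖p - Rl p‖ := by
    rw [e2, norm_smul, Real.norm_eq_abs, abs_of_pos hμ]
  have hC : ‖q - R q‖ = (k + 1) * ‖q - Rl q‖ := by
    rw [e3, norm_smul, Real.norm_eq_abs, abs_of_pos hμ]
  have hD : ‖(k + 1) • (p - q) + q - R q‖ = (k + 1) * ‖p - Rl q‖ := by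
    rw [e4, norm_smul, Real.norm_eq_abs, abs_of_pos hμ]
  have hE : ‖(k + 1) • (q - p) + p - R p‖ = (k + 1) * ‖q - Rl p‖ := by
    rw [e5, norm_smul, Real.norm_eq_abs, abs_of_pos hμ]
  have hnorm : ‖Rl p - Rl q‖ = lam * ‖k • (p - q) + R p - R q‖ := by
    rw [e1, norm_smul, Real.norm_eq_abs, abs_of_pos hlam0]
  have harg :
      ‖(k + 1) • (p - q)‖ ^ b * ‖p - R p‖ ^ a * ‖q - R q‖ ^ c *
          ((1 / 2) * (‖(k + 1) • (p - q) + q - R q‖ + ‖(k + 1) • (q - p) + p - R p‖)) ^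
            (1 - a - b - c)
        = (1 / lam) * (‖p - q‖ ^ b * ‖p - Rl p‖ ^ a * ‖q - Rl q‖ ^ c *
          ((1 / 2) * (‖p - Rl q‖ + ‖q - Rl p‖)) ^ (1 - a - b - c)) := by
    rw [hA, hB, hC, hD, hE, hinv]
    have h6 : (1 / 2 : ℝ) * ((k + 1) * ‖p - Rl q‖ + (k + 1) * ‖q - Rl p‖)
        = (k + 1) * ((1 / 2) * (‖p - Rl q‖ + ‖q - Rl p‖)) := by ring
    rw [h6]
    rw [Real.mul_rpow hμ.le (norm_nonneg _), Real.mul_rpow hμ.le (norm_nonneg _),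
      Real.mul_rpow hμ.le (norm_nonneg _),
      Real.mul_rpow hμ.le (by positivity)]
    have hexp : (k + 1) ^ b * (k + 1) ^ a * (k + 1) ^ c * (k + 1) ^ (1 - a - b - c)
        = k + 1 := by
      rw [← Real.rpow_add hμ, ← Real.rpow_add hμ, ← Real.rpow_add hμ]
      have : b + a + c + (1 - a - b - c) = 1 := by ring
      rw [this, Real.rpow_one]
    calc (k + 1) ^ b * ‖p - q‖ ^ b * ((k + 1) ^ a * ‖p - Rl p‖ ^ a) *
          ((k + 1) ^ c * ‖q - Rl q‖ ^ c) *
          ((k + 1) ^ (1 - a - b - c) * ((1 / 2) * (‖p - Rl q‖ + ‖q - Rl p‖)) ^ (1 - a - b - c))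
        = ((k + 1) ^ b * (k + 1) ^ a * (k + 1) ^ c * (k + 1) ^ (1 - a - b - c)) *
          (‖p - q‖ ^ b * ‖p - Rl p‖ ^ a * ‖q - Rl q‖ ^ c *
            ((1 / 2) * (‖p - Rl q‖ + ‖q - Rl p‖)) ^ (1 - a - b - c)) := by ring
      _ = _ := by rw [hexp]
  rw [hnorm, ← harg]
  exact mul_le_mul_of_nonneg_left (hR p q hp' hq') hlam0.le
end

section
/- Let (G, ‖·‖) be a Banach space, R : G → G satisfying the interpolative Matkowski condition with comparison function ζ, and let {p_m} be the Picard iteration p_{m+1} = R(p_m) with p_m ≠ p_{m+1} for all m. Then the sequence of consecutive distances is strictly decreasing: ‖p_{m+1} − p_m‖ < ‖p_m − p_{m−1}‖ for all m ≥ 1. -/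
theorem stmt_4 {G : Type*} [NormedAddCommGroup G] [NormedSpace ℝ G] [CompleteSpace G]
    (R : G → G) (a b c : ℝ) (ζ : ℝ → ℝ)
    (ha : a ∈ Set.Ioo (0:ℝ) 1) (hb : b ∈ Set.Ioo (0:ℝ) 1) (hc : c ∈ Set.Ioo (0:ℝ) 1)
    (habc : a + b + c < 1)
    (hζmono : ∀ s t : ℝ, 0 ≤ s → s ≤ t → ζ s ≤ ζ t)
    (hζlt : ∀ t : ℝ, 0 < t → ζ t < t)
    (hR : ∀ p q : G, R p ≠ p → R q ≠ q →
      ‖R p - R q‖ ≤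
        ζ (‖p - q‖ ^ b * ‖p - R p‖ ^ a * ‖q - R q‖ ^ c *
          ((1 / 2) * (‖p - R q‖ + ‖q - R p‖)) ^ (1 - a - b - c)))
    (p : ℕ → G) (hp : ∀ m, p (m + 1) = R (p m))
    (hne : ∀ m, p m ≠ p (m + 1)) :
    ∀ m : ℕ, 1 ≤ m → ‖p (m + 1) - p m‖ < ‖p m - p (m - 1)‖ := by
  rintro m hm
  obtain ⟨n, rfl⟩ := Nat.exists_eq_add_of_le hm
  simp only [Nat.add_sub_cancel_left] at *
  set d0 := ‖p (1 + n) - p n‖ with hd0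
  set d1 := ‖p (1 + n + 1) - p (1 + n)‖ with hd1
  have hn1 : (1 + n : ℕ) = n + 1 := by omega
  have hd0pos : 0 < d0 := by
    rw [hd0, norm_pos_iff, sub_ne_zero]
    rw [hn1]; exact (hne n).symm
  have hd1pos : 0 < d1 := by
    rw [hd1, norm_pos_iff, sub_ne_zero]
    exact (hne (1 + n)).symm
  by_contra hcon
  push_neg at hcon
  -- hcon : d0 ≤ d1
  have hRn : R (p n) ≠ p n := by
    rw [← hp n, ← hn1]; intro h; rw [hn1] at h; exact hne n h.symm
  have hRn1 : R (p (1 + n)) ≠ p (1 + n) := by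
    rw [← hp (1 + n)]; exact fun h => hne (1 + n) h.symm
  have key := hR (p n) (p (1 + n)) hRn hRn1
  rw [← hp n, ← hp (1 + n), ← hn1] at key
  have e1 : ‖p n - p (1 + n)‖ = d0 := norm_sub_rev _ _
  have e2 : ‖p (1 + n) - p (1 + n + 1)‖ = d1 := norm_sub_rev _ _
  have e3 : ‖p (1 + n) - p (1 + n)‖ = 0 := by simp
  rw [e1, e2, e3, add_zero] at key
  -- key : d1' ≤ ζ (d0^b * d0^a * d1^c * ((1/2) * ‖p n - p (1+n+1)‖)^(1-a-b-c))
  have hhalf : (1 / 2 : ℝ) * ‖p n - p (1 + n + 1)‖ ≤ d1 := by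
    have : ‖p n - p (1 + n + 1)‖ ≤ d0 + d1 := by
      calc ‖p n - p (1 + n + 1)‖ ≤ ‖p n - p (1 + n)‖ + ‖p (1 + n) - p (1 + n + 1)‖ :=
            norm_sub_le_norm_sub_add_norm_sub _ _ _
        _ = d0 + d1 := by rw [e1, e2]
    nlinarith
  have harg : d0 ^ b * d0 ^ a * d1 ^ c * ((1 / 2) * ‖p n - p (1 + n + 1)‖) ^ (1 - a - b - c)
      ≤ d1 := by
    have h1 : d0 ^ b ≤ d1 ^ b := Real.rpow_le_rpow hd0pos.le hcon hb.1.le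
    have h2 : d0 ^ a ≤ d1 ^ a := Real.rpow_le_rpow hd0pos.le hcon ha.1.le
    have h4 : ((1 / 2 : ℝ) * ‖p n - p (1 + n + 1)‖) ^ (1 - a - b - c) ≤ d1 ^ (1 - a - b - c) :=
      Real.rpow_le_rpow (by positivity) hhalf (by linarith)
    calc d0 ^ b * d0 ^ a * d1 ^ c * ((1 / 2) * ‖p n - p (1 + n + 1)‖) ^ (1 - a - b - c)
        ≤ d1 ^ b * d1 ^ a * d1 ^ c * d1 ^ (1 - a - b - c) := by
          gcongr <;> positivity
      _ = d1 ^ (b + a + c + (1 - a - b - c)) := by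
          rw [← Real.rpow_add hd1pos, ← Real.rpow_add hd1pos, ← Real.rpow_add hd1pos]
      _ = d1 := by ring_nf; rw [Real.rpow_one]
  have hargnn : (0:ℝ) ≤ d0 ^ b * d0 ^ a * d1 ^ c * ((1 / 2) * ‖p n - p (1 + n + 1)‖) ^ (1 - a - b - c) := by
    positivity
  have := (key.trans (hζmono _ _ hargnn harg)).trans_lt (hζlt d1 hd1pos)
  exact lt_irrefl _ this
end

section
/- Let (G, ‖·‖) be a Banach space, R : G → G satisfying the interpolative Matkowski condition with comparison function ζ, and {p_m} the Picard iteration with p_m ≠ p_{m+1} for all m. Then ‖p_{m+1} − p_m‖ ≤ ζ^m(‖p_1 − p_0‖) for all m ≥ 1, and consequently ‖p_{m+1} − p_m‖ → 0 as m → ∞. -/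
open Filter

theorem stmt_5 {G : Type*} [NormedAddCommGroup G] [NormedSpace ℝ G] [CompleteSpace G]
    (R : G → G) (a b c : ℝ) (ζ : ℝ → ℝ)
    (ha : a ∈ Set.Ioo (0:ℝ) 1) (hb : b ∈ Set.Ioo (0:ℝ) 1) (hc : c ∈ Set.Ioo (0:ℝ) 1)
    (habc : a + b + c < 1)
    (hζnonneg : ∀ t : ℝ, 0 ≤ t → 0 ≤ ζ t)
    (hζmono : ∀ s t : ℝ, 0 ≤ s → s ≤ t → ζ s ≤ ζ t)
    (hζiter : ∀ t : ℝ, 0 < t → Tendsto (fun n => ζ^[n] t) atTop (nhds 0))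
    (hR : ∀ p q : G, R p ≠ p → R q ≠ q →
      ‖R p - R q‖ ≤
        ζ (‖p - q‖ ^ b * ‖p - R p‖ ^ a * ‖q - R q‖ ^ c *
          ((1 / 2) * (‖p - R q‖ + ‖q - R p‖)) ^ (1 - a - b - c)))
    (p : ℕ → G) (hp : ∀ m, p (m + 1) = R (p m))
    (hne : ∀ m, p m ≠ p (m + 1)) :
    (∀ m : ℕ, 1 ≤ m → ‖p (m + 1) - p m‖ ≤ ζ^[m] ‖p 1 - p 0‖) ∧
      Tendsto (fun m => ‖p (m + 1) - p m‖) atTop (nhds 0) := by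
  obtain ⟨ha0, ha1⟩ := ha
  obtain ⟨hb0, hb1⟩ := hb
  obtain ⟨hc0, hc1⟩ := hc
  have hθ : 0 < 1 - a - b - c := by linarith
  -- ζ t < t for t > 0
  have hζlt : ∀ t : ℝ, 0 < t → ζ t < t := by
    intro t ht
    by_contra h
    push_neg at h
    have hn : ∀ n, t ≤ ζ^[n] t := by
      intro n
      induction n with
      | zero => simp
      | succ n ih =>
        rw [Function.iterate_succ_apply']
        exact le_trans h (hζmono t _ ht.le ih)
    have := ge_of_tendsto (hζiter t ht) (Eventually.of_forall hn)
    linarith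
  have hd : ∀ m, 0 < ‖p (m + 1) - p m‖ := by
    intro m
    rw [norm_pos_iff, sub_ne_zero]
    exact (hne m).symm
  have key : ∀ m, ‖p (m + 2) - p (m + 1)‖ ≤ ζ ‖p (m + 1) - p m‖ := by
    intro m
    have hu := hd m
    have hv := hd (m + 1)
    have hRp : R (p m) ≠ p m := by rw [← hp m]; exact (hne m).symm
    have hRq : R (p (m + 1)) ≠ p (m + 1) := by rw [← hp (m + 1)]; exact (hne (m + 1)).symm
    have h1 := hR (p m) (p (m + 1)) hRp hRq
    rw [← hp (m + 1), ← hp m] at h1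
    have e1 : ‖p m - p (m + 1)‖ = ‖p (m + 1) - p m‖ := norm_sub_rev _ _
    have e2 : ‖p (m + 1) - p (m + 2)‖ = ‖p (m + 2) - p (m + 1)‖ := norm_sub_rev _ _
    rw [e1, e2, sub_self, norm_zero, add_zero] at h1
    set u := ‖p (m + 1) - p m‖ with hudef
    set v := ‖p (m + 2) - p (m + 1)‖ with hvdef
    set w := ‖p m - p (m + 2)‖ with hwdef
    have hw : w ≤ u + v := by
      calc w ≤ ‖p m - p (m + 1)‖ + ‖p (m + 1) - p (m + 2)‖ :=
            norm_sub_le_norm_sub_add_norm_sub _ _ _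
        _ = u + v := by rw [e1, e2]
    have hwnn : (0:ℝ) ≤ w := norm_nonneg _
    rcases le_or_gt v u with hvu | huv
    · -- product ≤ u
      have hprod : u ^ b * u ^ a * v ^ c * ((1 / 2) * w) ^ (1 - a - b - c)
          ≤ u ^ b * u ^ a * u ^ c * u ^ (1 - a - b - c) := by
        gcongr <;> first | positivity | linarith
      have heq : u ^ b * u ^ a * u ^ c * u ^ (1 - a - b - c) = u := by
        rw [← Real.rpow_add hu, ← Real.rpow_add hu, ← Real.rpow_add hu,
          show b + a + c + (1 - a - b - c) = 1 by ring, Real.rpow_one]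
      calc v ≤ ζ (u ^ b * u ^ a * v ^ c * ((1 / 2) * w) ^ (1 - a - b - c)) := h1
        _ ≤ ζ (u ^ b * u ^ a * u ^ c * u ^ (1 - a - b - c)) :=
            hζmono _ _ (by positivity) hprod
        _ = ζ u := by rw [heq]
    · -- contradiction case
      exfalso
      have hprod : u ^ b * u ^ a * v ^ c * ((1 / 2) * w) ^ (1 - a - b - c)
          ≤ v ^ b * v ^ a * v ^ c * v ^ (1 - a - b - c) := by
        gcongr <;> first | positivity | linarith
      have heq : v ^ b * v ^ a * v ^ c * v ^ (1 - a - b - c) = v := by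
        rw [← Real.rpow_add hv, ← Real.rpow_add hv, ← Real.rpow_add hv,
          show b + a + c + (1 - a - b - c) = 1 by ring, Real.rpow_one]
      have : v ≤ ζ v := by
        calc v ≤ ζ (u ^ b * u ^ a * v ^ c * ((1 / 2) * w) ^ (1 - a - b - c)) := h1
          _ ≤ ζ (v ^ b * v ^ a * v ^ c * v ^ (1 - a - b - c)) :=
              hζmono _ _ (by positivity) hprod
          _ = ζ v := by rw [heq]
      exact absurd this (not_le.2 (hζlt v hv))
  have aux : ∀ n : ℕ, ‖p (n + 2) - p (n + 1)‖ ≤ ζ^[n + 1] ‖p 1 - p 0‖ := by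
    intro n
    induction n with
    | zero => simpa using key 0
    | succ n ih =>
      rw [Function.iterate_succ_apply']
      exact le_trans (key (n + 1)) (hζmono _ _ (norm_nonneg _) ih)
  have part1 : ∀ m : ℕ, 1 ≤ m → ‖p (m + 1) - p m‖ ≤ ζ^[m] ‖p 1 - p 0‖ := by
    intro m hm
    match m, hm with
    | (n + 1), _ => exact aux n
  refine ⟨part1, ?_⟩
  apply squeeze_zero' (Eventually.of_forall fun m => norm_nonneg _)
    (eventually_atTop.2 ⟨1, part1⟩)
  exact hζiter _ (hd 0)
end

section
/- Let G = ℝ³ with the ℓ¹ norm ‖(p,q,r)‖ = |p|+|q|+|r|, R(z) = −z/2, k = 1/2, ζ(t) = t/14. Then ‖k(x−y) + Rx − Ry‖ = 0 for all x, y ∈ ℝ³, so R is an enriched interpolative Matkowski mapping, but R fails the interpolative Matkowski condition with ζ(t)=t/14 and exponents b = 1/2, a = c = 1/8 at the points x = (2,2,2), y = (−2,−2,−2): indeed ‖Rx − Ry‖ = 6 while ζ( ‖x−y‖^b ‖x−Rx‖^a ‖y−Ry‖^c ((1/2)(‖x−Ry‖+‖y−Rx‖))^{1−a−b−c} ) <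 1. -/
theorem stmt_7 (ζ : ℝ → ℝ) (hζ : ζ = fun t => t / 14)
    (R : PiLp 1 (fun _ : Fin 3 => ℝ) → PiLp 1 (fun _ : Fin 3 => ℝ))
    (hR : ∀ z, R z = -(1 / 2 : ℝ) • z)
    (k : ℝ) (hk : k = 1 / 2)
    (a b c : ℝ) (ha : a = 1 / 8) (hb : b = 1 / 2) (hc : c = 1 / 8)
    (x y : PiLp 1 (fun _ : Fin 3 => ℝ))
    (hx : x = (WithLp.equiv 1 (Fin 3 → ℝ)).symm ![2, 2, 2])
    (hy : y = (WithLp.equiv 1 (Fin 3 → ℝ)).symm ![-2, -2, -2]) :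
    (∀ u v : PiLp 1 (fun _ : Fin 3 => ℝ), ‖k • (u - v) + R u - R v‖ = 0) ∧
      ‖R x - R y‖ = 6 ∧
      ζ (‖x - y‖ ^ b * ‖x - R x‖ ^ a * ‖y - R y‖ ^ c *
        ((1 / 2) * (‖x - R y‖ + ‖y - R x‖)) ^ (1 - a - b - c)) < 1 := by
  have hnorm : ∀ u : PiLp 1 (fun _ : Fin 3 => ℝ), ‖u‖ = |u 0| + |u 1| + |u 2| := by
    intro u
    rw [PiLp.norm_eq_sum (p := 1) (by norm_num)]
    simp [Fin.sum_univ_three]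
  refine ⟨?_, ?_, ?_⟩
  · intro u v
    have : k • (u - v) + R u - R v = 0 := by
      rw [hR, hR, hk]; module
    rw [this, norm_zero]
  · have : R x - R y = (WithLp.equiv 1 (Fin 3 → ℝ)).symm ![-2, -2, -2] := by
      rw [hR, hR, hx, hy]
      apply PiLp.ext
      intro i
      fin_cases i <;> simp <;> norm_num
    rw [this, hnorm]
    norm_num [Matrix.cons_val_two, Matrix.vecHead, Matrix.vecTail]
  · have h1 : ‖x - y‖ = 12 := by
      rw [hx, hy, hnorm]
      norm_num [Matrix.cons_val_two, Matrix.vecHead, Matrix.vecTail]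
    have h2 : ‖x - R x‖ = 9 := by
      rw [hR, hx, hnorm]
      norm_num [Matrix.cons_val_two, Matrix.vecHead, Matrix.vecTail]
    have h3 : ‖y - R y‖ = 9 := by
      rw [hR, hy, hnorm]
      norm_num [Matrix.cons_val_two, Matrix.vecHead, Matrix.vecTail]
    have h4 : ‖x - R y‖ = 3 := by
      rw [hR, hx, hy, hnorm]
      norm_num [Matrix.cons_val_two, Matrix.vecHead, Matrix.vecTail]
    have h5 : ‖y - R x‖ = 3 := by
      rw [hR, hx, hy, hnorm]
      norm_num [Matrix.cons_val_two, Matrix.vecHead, Matrix.vecTail]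
    rw [hζ, h1, h2, h3, h4, h5, ha, hb, hc]
    norm_num
    -- goal should be: 12^(1/2) * 9^(1/8) * 9^(1/8) * 3^(1/4) / 14 < 1
    have key : (12:ℝ) ^ ((1:ℝ)/2) * 9 ^ ((1:ℝ)/8) * 9 ^ ((1:ℝ)/8) * 3 ^ ((1:ℝ)/4) < 14 := by
      have hA : ((12:ℝ) ^ ((1:ℝ)/2)) ^ (8:ℕ) = 20736 := by
        rw [← Real.rpow_natCast ((12:ℝ) ^ ((1:ℝ)/2)) 8, ← Real.rpow_mul (by norm_num)]
        norm_num
      have hB : ((9:ℝ) ^ ((1:ℝ)/8)) ^ (8:ℕ) = 9 := by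
        rw [← Real.rpow_natCast ((9:ℝ) ^ ((1:ℝ)/8)) 8, ← Real.rpow_mul (by norm_num)]
        norm_num
      have hC : ((3:ℝ) ^ ((1:ℝ)/4)) ^ (8:ℕ) = 9 := by
        rw [← Real.rpow_natCast ((3:ℝ) ^ ((1:ℝ)/4)) 8, ← Real.rpow_mul (by norm_num)]
        norm_num
      have hpow : ((12:ℝ) ^ ((1:ℝ)/2) * 9 ^ ((1:ℝ)/8) * 9 ^ ((1:ℝ)/8) * 3 ^ ((1:ℝ)/4)) ^ (8:ℕ)
          < (14:ℝ) ^ (8:ℕ) := by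
        rw [mul_pow, mul_pow, mul_pow, hA, hB, hC]
        norm_num
      exact lt_of_pow_lt_pow_left₀ 8 (by norm_num) hpow
    linarith
end

section
/- Let (G, ‖·‖) be a Banach space and R : G → G a mapping for which there exist a, b, c ∈ (0,1) with a+b+c < 1, M ∈ [0,1), k ∈ [0,∞), such that ‖k(p−q) + Rp − Rq‖ ≤ M · ‖(k+1)(p−q)‖^b ‖p−Rp‖^a ‖q−Rq‖^c ( (1/2)(‖(k+1)(p−q)+q−Rq‖ + ‖(k+1)(q−p)+p−Rp‖) )^{1−a−b−c} for all p, q not fixed points of R. Then R has a fixed point in G. -/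
open Filter Topology

theorem stmt_8 {G : Type*} [NormedAddCommGroup G] [NormedSpace ℝ G] [CompleteSpace G]
    (R : G → G) (a b c k M : ℝ)
    (ha : a ∈ Set.Ioo (0:ℝ) 1) (hb : b ∈ Set.Ioo (0:ℝ) 1) (hc : c ∈ Set.Ioo (0:ℝ) 1)
    (habc : a + b + c < 1) (hM : M ∈ Set.Ico (0:ℝ) 1) (hk : 0 ≤ k)
    (hR : ∀ p q : G, R p ≠ p → R q ≠ q →
      ‖k • (p - q) + R p - R q‖ ≤
        M * (‖(k + 1) • (p - q)‖ ^ b * ‖p - R p‖ ^ a * ‖q - R q‖ ^ c *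
          ((1 / 2) * (‖(k + 1) • (p - q) + q - R q‖ + ‖(k + 1) • (q - p) + p - R p‖)) ^
            (1 - a - b - c))) :
    ∃ s : G, R s = s := by
  obtain ⟨hM0, hM1⟩ := hM
  have hK : (0:ℝ) < k + 1 := by linarith
  have he : (0:ℝ) < 1 - a - b - c := by linarith
  set T : G → G := fun p => (k + 1)⁻¹ • (k • p + R p) with hT_def
  have hT : ∀ p, (k + 1) • T p = k • p + R p := by
    intro p
    simp only [hT_def]
    rw [smul_inv_smul₀ hK.ne']
  -- fixed points of T and R coincide
  have hTfix : ∀ p, T p = p ↔ R p = p := by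
    intro p
    constructor
    · intro h
      have h2 : (k + 1) • T p = (k + 1) • p := by rw [h]
      rw [hT] at h2
      have : R p = (k + 1) • p - k • p := by
        rw [← h2]; abel
      rw [this, add_smul, one_smul]; abel
    · intro h
      have : (k + 1) • T p = (k + 1) • p := by
        rw [hT, h, add_smul, one_smul]
      exact smul_right_injective G hK.ne' this
  have hnormK : ∀ x : G, ‖(k + 1) • x‖ = (k + 1) * ‖x‖ := by
    intro x
    rw [norm_smul, Real.norm_of_nonneg hK.le]
  -- key interpolative inequality for T
  have key : ∀ p q : G, T p ≠ p → T q ≠ q →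
      ‖T p - T q‖ ≤ M * (‖p - q‖ ^ b * ‖p - T p‖ ^ a * ‖q - T q‖ ^ c *
        ((1 / 2) * (‖p - T q‖ + ‖q - T p‖)) ^ (1 - a - b - c)) := by
    intro p q hp hq
    have hRp : R p ≠ p := fun h => hp ((hTfix p).mpr h)
    have hRq : R q ≠ q := fun h => hq ((hTfix q).mpr h)
    have H := hR p q hRp hRq
    have e1 : (k + 1) • (T p - T q) = k • (p - q) + R p - R q := by
      rw [smul_sub ((k:ℝ) + 1) (T p) (T q), hT, hT]; module
    have e2 : (k + 1) • (p - T p) = p - R p := by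
      rw [smul_sub ((k:ℝ) + 1) p (T p), hT]; module
    have e2' : (k + 1) • (q - T q) = q - R q := by
      rw [smul_sub ((k:ℝ) + 1) q (T q), hT]; module
    have e3 : (k + 1) • (p - T q) = (k + 1) • (p - q) + q - R q := by
      rw [smul_sub ((k:ℝ) + 1) p (T q), hT]; module
    have e4 : (k + 1) • (q - T p) = (k + 1) • (q - p) + p - R p := by
      rw [smul_sub ((k:ℝ) + 1) q (T p), hT]; module
    rw [← e1, ← e3, ← e4, ← e2, ← e2', hnormK, hnormK, hnormK, hnormK, hnormK, hnormK] at H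
    have hfac : ∀ x : ℝ, 0 ≤ x → ∀ t : ℝ, ((k + 1) * x) ^ t = (k + 1) ^ t * x ^ t := by
      intro x hx t
      exact Real.mul_rpow hK.le hx
    rw [hfac _ (norm_nonneg _), hfac _ (norm_nonneg _), hfac _ (norm_nonneg _)] at H
    have e5 : (1 / 2) * ((k + 1) * ‖p - T q‖ + (k + 1) * ‖q - T p‖)
        = (k + 1) * ((1 / 2) * (‖p - T q‖ + ‖q - T p‖)) := by ring
    rw [e5, hfac _ (by positivity)] at H
    have e6 : (k+1) ^ b * (k+1) ^ a * (k+1) ^ c * (k+1) ^ (1 - a - b - c) = k + 1 := by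
      rw [← Real.rpow_add hK, ← Real.rpow_add hK, ← Real.rpow_add hK]
      have : b + a + c + (1 - a - b - c) = 1 := by ring
      rw [this, Real.rpow_one]
    have H2 : (k + 1) * ‖T p - T q‖ ≤
        (k + 1) * (M * (‖p - q‖ ^ b * ‖p - T p‖ ^ a * ‖q - T q‖ ^ c *
          ((1 / 2) * (‖p - T q‖ + ‖q - T p‖)) ^ (1 - a - b - c))) := by
      calc (k + 1) * ‖T p - T q‖ ≤
          M * ((k+1) ^ b * ‖p - q‖ ^ b * ((k+1) ^ a * ‖p - T p‖ ^ a) *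
            ((k+1) ^ c * ‖q - T q‖ ^ c) *
            ((k+1) ^ (1 - a - b - c) *
              ((1 / 2) * (‖p - T q‖ + ‖q - T p‖)) ^ (1 - a - b - c))) := H
        _ = ((k+1) ^ b * (k+1) ^ a * (k+1) ^ c * (k+1) ^ (1 - a - b - c)) *
            (M * (‖p - q‖ ^ b * ‖p - T p‖ ^ a * ‖q - T q‖ ^ c *
              ((1 / 2) * (‖p - T q‖ + ‖q - T p‖)) ^ (1 - a - b - c))) := by ring
        _ = _ := by rw [e6]
    exact le_of_mul_le_mul_left H2 hK
  -- the orbit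
  set u : ℕ → G := fun n => T^[n] 0 with hu_def
  have hu_succ : ∀ n, u (n + 1) = T (u n) := by
    intro n
    simp only [hu_def, Function.iterate_succ_apply']
  by_cases hex : ∃ n, T (u n) = u n
  · obtain ⟨n, hn⟩ := hex
    exact ⟨u n, (hTfix _).mp hn⟩
  push_neg at hex
  set d : ℕ → ℝ := fun n => ‖u (n + 1) - u n‖ with hd_def
  have hdpos : ∀ n, 0 < d n := by
    intro n
    rw [hd_def]
    simp only [norm_pos_iff, sub_ne_zero, hu_succ]
    exact hex n
  set r : ℝ := M ^ (1 - a)⁻¹ with hr_def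
  have hr0 : 0 ≤ r := Real.rpow_nonneg hM0 _
  have ha1 : (0:ℝ) < 1 - a := by linarith [ha.2]
  have hr1 : r < 1 := Real.rpow_lt_one hM0 hM1 (inv_pos.mpr ha1)
  -- contraction of successive displacements
  have hcontr : ∀ n, d (n + 1) ≤ r * d n := by
    intro n
    have H := key (u (n + 1)) (u n) (hex (n + 1)) (hex n)
    rw [← hu_succ, ← hu_succ] at H
    have hDd : ‖u (n + 1) - u (n + 2)‖ = d (n + 1) := norm_sub_rev _ _
    have hDD : ‖u n - u (n + 1)‖ = d n := norm_sub_rev _ _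
    have hself : ‖u (n + 1) - u (n + 1)‖ = 0 := by simp
    rw [hDd, hDD, hself] at H
    have htri : ‖u n - u (n + 2)‖ ≤ d n + d (n + 1) := by
      calc ‖u n - u (n + 2)‖ ≤ ‖u n - u (n+1)‖ + ‖u (n+1) - u (n + 2)‖ := norm_sub_le_norm_sub_add_norm_sub _ _ _
        _ = d n + d (n + 1) := by rw [hDd, hDD]
    have hd1 := hdpos (n + 1)
    have hd0 := hdpos n
    rcases le_or_gt (d (n + 1)) (d n) with hle | hlt
    · -- E ≤ d n
      have hE : (1 / 2) * (0 + ‖u n - u (n + 2)‖) ≤ d n := by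
        have := htri; linarith
      have hEe : (1 / 2 * (0 + ‖u n - u (n + 2)‖)) ^ (1 - a - b - c) ≤
          d n ^ (1 - a - b - c) :=
        Real.rpow_le_rpow (by positivity) hE he.le
      have H2 : d (n + 1) ≤ M * (d n ^ b * d (n+1) ^ a * d n ^ c * (d n) ^ (1 - a - b - c)) := by
        refine H.trans (mul_le_mul_of_nonneg_left ?_ hM0)
        exact mul_le_mul_of_nonneg_left hEe (by positivity)
      have hDcomb : d n ^ b * d n ^ c * d n ^ (1 - a - b - c) = d n ^ (1 - a) := by
        rw [← Real.rpow_add hd0, ← Real.rpow_add hd0]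
        congr 1; ring
      have H2' : d (n + 1) ≤ (M * d n ^ (1 - a)) * d (n + 1) ^ a := by
        calc d (n + 1) ≤ M * (d n ^ b * d (n+1) ^ a * d n ^ c * (d n) ^ (1 - a - b - c)) := H2
          _ = (M * (d n ^ b * d n ^ c * d n ^ (1 - a - b - c))) * d (n + 1) ^ a := by ring
          _ = (M * d n ^ (1 - a)) * d (n + 1) ^ a := by rw [hDcomb]
      have hsplit : d (n+1) ^ (1 - a) * d (n+1) ^ a = d (n + 1) := by
        rw [← Real.rpow_add hd1, show (1 - a) + a = (1:ℝ) by ring, Real.rpow_one]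
      have H3 : d (n+1) ^ (1 - a) ≤ M * d n ^ (1 - a) := by
        refine le_of_mul_le_mul_right ?_ (Real.rpow_pos_of_pos hd1 a)
        rw [hsplit]; exact H2'
      have H4 : (d (n+1) ^ (1 - a)) ^ (1 - a)⁻¹ ≤ (M * d n ^ (1 - a)) ^ (1 - a)⁻¹ :=
        Real.rpow_le_rpow (Real.rpow_nonneg hd1.le _) H3 (by positivity)
      rw [Real.rpow_rpow_inv hd1.le ha1.ne', Real.mul_rpow hM0 (Real.rpow_nonneg hd0.le _),
        Real.rpow_rpow_inv hd0.le ha1.ne'] at H4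
      exact H4
    · -- contradiction case : d n < d (n+1)
      exfalso
      have hE : (1 / 2) * (0 + ‖u n - u (n + 2)‖) ≤ d (n + 1) := by
        have := htri; linarith
      have hEe : (1 / 2 * (0 + ‖u n - u (n + 2)‖)) ^ (1 - a - b - c) ≤
          d (n+1) ^ (1 - a - b - c) :=
        Real.rpow_le_rpow (by positivity) hE he.le
      have hDb : d n ^ b ≤ d (n+1) ^ b := Real.rpow_le_rpow hd0.le hlt.le hb.1.le
      have hDc : d n ^ c ≤ d (n+1) ^ c := Real.rpow_le_rpow hd0.le hlt.le hc.1.le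
      have H2 : d (n + 1) ≤ M * (d (n+1) ^ b * d (n+1) ^ a * d (n+1) ^ c *
          d (n+1) ^ (1 - a - b - c)) := by
        refine H.trans (mul_le_mul_of_nonneg_left ?_ hM0)
        refine mul_le_mul ?_ hEe (by positivity) (by positivity)
        refine mul_le_mul ?_ hDc (by positivity) (by positivity)
        exact mul_le_mul hDb le_rfl (by positivity) (by positivity)
      have hcomb : d (n+1) ^ b * d (n+1) ^ a * d (n+1) ^ c * d (n+1) ^ (1 - a - b - c)
          = d (n + 1) := by
        rw [← Real.rpow_add hd1, ← Real.rpow_add hd1, ← Real.rpow_add hd1]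
        have : b + a + c + (1 - a - b - c) = 1 := by ring
        rw [this, Real.rpow_one]
      rw [hcomb] at H2
      nlinarith
  -- geometric bound
  have hgeo : ∀ n, d n ≤ d 0 * r ^ n := by
    intro n
    induction n with
    | zero => simp
    | succ n ih =>
      calc d (n + 1) ≤ r * d n := hcontr n
        _ ≤ r * (d 0 * r ^ n) := by
          exact mul_le_mul_of_nonneg_left ih hr0
        _ = d 0 * r ^ (n + 1) := by ring
  have hcauchy : CauchySeq u := by
    apply cauchySeq_of_le_geometric r (d 0) hr1
    intro n
    rw [dist_eq_norm, norm_sub_rev]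
    exact hgeo n
  obtain ⟨s, hs⟩ := cauchySeq_tendsto_of_complete hcauchy
  refine ⟨s, ?_⟩
  by_contra hRs
  have hTs : T s ≠ s := fun h => hRs ((hTfix s).mp h)
  -- norms of displacements tend to zero
  have hd0lim : Tendsto d atTop (𝓝 0) := by
    have hlim : Tendsto (fun n : ℕ => d 0 * r ^ n) atTop (𝓝 (d 0 * 0)) :=
      (tendsto_pow_atTop_nhds_zero_of_lt_one hr0 hr1).const_mul (d 0)
    rw [mul_zero] at hlim
    exact squeeze_zero (fun n => (hdpos n).le) hgeo hlim
  have hns : Tendsto (fun n => ‖u n - s‖) atTop (𝓝 0) := by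
    have := (hs.sub_const s).norm
    simpa using this
  have hus1 : Tendsto (fun n => u (n + 1)) atTop (𝓝 s) :=
    hs.comp (tendsto_add_atTop_nat 1)
  -- each factor in the bound
  have h1 : Tendsto (fun n => ‖u n - s‖ ^ b) atTop (𝓝 0) := by
    have := (Real.continuousAt_rpow_const 0 b (Or.inr hb.1.le)).tendsto.comp hns
    simpa [Real.zero_rpow hb.1.ne', Function.comp_def] using this
  have h2 : Tendsto (fun n => ‖u n - u (n + 1)‖ ^ a) atTop (𝓝 (0 ^ a)) := by
    refine (Real.continuousAt_rpow_const 0 a (Or.inr ha.1.le)).tendsto.comp ?_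
    have : (fun n => ‖u n - u (n + 1)‖) = d := by
      funext n; rw [hd_def, norm_sub_rev]
    rw [this]; exact hd0lim
  rw [Real.zero_rpow ha.1.ne'] at h2
  have h4base : Tendsto (fun n => (1 / 2) * (‖u n - T s‖ + ‖s - u (n + 1)‖)) atTop
      (𝓝 ((1 / 2) * (‖s - T s‖ + 0))) := by
    apply Tendsto.const_mul
    apply Tendsto.add
    · exact (hs.sub_const (T s)).norm
    · have h0 : Tendsto (fun n : ℕ => ‖s - u (n + 1)‖) atTop (𝓝 ‖s - s‖) :=
        (Tendsto.sub tendsto_const_nhds hus1).norm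
      simpa using h0
  have h4 : Tendsto (fun n => ((1 / 2) * (‖u n - T s‖ + ‖s - u (n + 1)‖)) ^ (1 - a - b - c))
      atTop (𝓝 (((1 / 2) * (‖s - T s‖ + 0)) ^ (1 - a - b - c))) :=
    (Real.continuousAt_rpow_const _ _ (Or.inr he.le)).tendsto.comp h4base
  have hrhs : Tendsto (fun n => M * (‖u n - s‖ ^ b * ‖u n - u (n + 1)‖ ^ a * ‖s - T s‖ ^ c *
      ((1 / 2) * (‖u n - T s‖ + ‖s - u (n + 1)‖)) ^ (1 - a - b - c))) atTop (𝓝 0) := by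
    have := (((h1.mul h2).mul (tendsto_const_nhds : Filter.Tendsto _ _ (𝓝 (‖s - T s‖ ^ c)))).mul h4).const_mul M
    simpa using this
  have hbound : ∀ n, ‖u (n + 1) - T s‖ ≤
      M * (‖u n - s‖ ^ b * ‖u n - u (n + 1)‖ ^ a * ‖s - T s‖ ^ c *
      ((1 / 2) * (‖u n - T s‖ + ‖s - u (n + 1)‖)) ^ (1 - a - b - c)) := by
    intro n
    have H := key (u n) s (hex n) hTs
    rw [← hu_succ] at H
    exact H
  have hlim2 : Tendsto (fun n => ‖u (n + 1) - T s‖) atTop (𝓝 0) :=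
    squeeze_zero (fun n => norm_nonneg _) hbound hrhs
  have : Tendsto (fun n => u (n + 1)) atTop (𝓝 (T s)) :=
    tendsto_iff_norm_sub_tendsto_zero.mpr hlim2
  exact hTs (tendsto_nhds_unique this hus1)
end

section
/- With R, S : G → G satisfying the joint enriched interpolative Matkowski condition with parameter k ≥ 0, set λ = 1/(k+1), R_λ = (1−λ)I + λR, S_λ = (1−λ)I + λS. Then for all p ∉ Fix(R_λ), q ∉ Fix(S_λ): ‖R_λ p − S_λ q‖ ≤ λ ζ( (1/λ) ‖p−q‖^b ‖p − R_λ p‖^a ‖q − S_λ q‖^c ((1/2)(‖p − S_λ q‖ + ‖q − R_λ p‖))^{1−a−b−c} ). -/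
lemma aux_rpow (μ A B C D a b c : ℝ) (hμ : 0 < μ) (hA : 0 ≤ A) (hB : 0 ≤ B)
    (hC : 0 ≤ C) (hD : 0 ≤ D) :
    (μ * A) ^ b * (μ * B) ^ a * (μ * C) ^ c * (μ * D) ^ (1 - a - b - c) =
      μ * (A ^ b * B ^ a * C ^ c * D ^ (1 - a - b - c)) := by
  rw [Real.mul_rpow hμ.le hA, Real.mul_rpow hμ.le hB, Real.mul_rpow hμ.le hC,
    Real.mul_rpow hμ.le hD]
  have h : μ ^ b * μ ^ a * μ ^ c * μ ^ (1 - a - b - c) = μ := by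
    rw [← Real.rpow_add hμ, ← Real.rpow_add hμ, ← Real.rpow_add hμ,
      show b + a + c + (1 - a - b - c) = (1:ℝ) by ring, Real.rpow_one]
  calc μ ^ b * A ^ b * (μ ^ a * B ^ a) * (μ ^ c * C ^ c) *
        (μ ^ (1 - a - b - c) * D ^ (1 - a - b - c))
      = (μ ^ b * μ ^ a * μ ^ c * μ ^ (1 - a - b - c)) *
        (A ^ b * B ^ a * C ^ c * D ^ (1 - a - b - c)) := by ring
    _ = μ * (A ^ b * B ^ a * C ^ c * D ^ (1 - a - b - c)) := by rw [h]

theorem stmt_13 {G : Type*} [NormedAddCommGroup G] [NormedSpace ℝ G]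
    (R S : G → G) (a b c k : ℝ) (ζ : ℝ → ℝ)
    (ha : a ∈ Set.Ioo (0:ℝ) 1) (hb : b ∈ Set.Ioo (0:ℝ) 1) (hc : c ∈ Set.Ioo (0:ℝ) 1)
    (habc : a + b + c < 1) (hk : 0 ≤ k)
    (hζnonneg : ∀ t : ℝ, 0 ≤ t → 0 ≤ ζ t)
    (hζmono : ∀ s t : ℝ, 0 ≤ s → s ≤ t → ζ s ≤ ζ t)
    (hζiter : ∀ t : ℝ, 0 < t → Filter.Tendsto (fun n => ζ^[n] t) Filter.atTop (nhds 0))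
    (hRS : ∀ p q : G, R p ≠ p → S q ≠ q →
      ‖k • (p - q) + R p - S q‖ ≤
        ζ (‖(k + 1) • (p - q)‖ ^ b * ‖p - R p‖ ^ a * ‖q - S q‖ ^ c *
          ((1 / 2) * (‖(k + 1) • (p - q) + q - S q‖ + ‖(k + 1) • (q - p) + p - R p‖)) ^
            (1 - a - b - c)))
    (lam : ℝ) (hlam : lam = 1 / (k + 1))
    (Rl Sl : G → G)
    (hRl : ∀ p, Rl p = (1 - lam) • p + lam • R p)
    (hSl : ∀ p, Sl p = (1 - lam) • p + lam • S p) :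
    ∀ p q : G, Rl p ≠ p → Sl q ≠ q →
      ‖Rl p - Sl q‖ ≤
        lam * ζ ((1 / lam) * (‖p - q‖ ^ b * ‖p - Rl p‖ ^ a * ‖q - Sl q‖ ^ c *
          ((1 / 2) * (‖p - Sl q‖ + ‖q - Rl p‖)) ^ (1 - a - b - c))) := by
  intro p q hRp hSq
  have htpos : (0:ℝ) < k + 1 := by linarith
  have hlampos : 0 < lam := by rw [hlam]; positivity
  have hinv : 1 / lam = k + 1 := by rw [hlam]; field_simp
  have hRne : R p ≠ p := by
    intro h
    apply hRp
    rw [hRl, h]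
    module
  have hSne : S q ≠ q := by
    intro h
    apply hSq
    rw [hSl, h]
    module
  -- vector identities
  have h1 : Rl p - Sl q = lam • (k • (p - q) + R p - S q) := by
    rw [hRl, hSl]
    subst hlam
    match_scalars <;> field_simp <;> ring
  have h2 : (k + 1) • (p - q) = (1 / lam) • (p - q) := by rw [hinv]
  have h3 : p - Rl p = lam • (p - R p) := by
    rw [hRl]; match_scalars <;> ring
  have h4 : q - Sl q = lam • (q - S q) := by
    rw [hSl]; match_scalars <;> ring
  have h5 : (k + 1) • (p - q) + q - S q = (1 / lam) • (p - Sl q) := by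
    rw [hSl, ← hinv]
    match_scalars <;> field_simp <;> ring
  have h6 : (k + 1) • (q - p) + p - R p = (1 / lam) • (q - Rl p) := by
    rw [hRl, ← hinv]
    match_scalars <;> field_simp <;> ring
  have hnl : ‖lam‖ = lam := Real.norm_of_nonneg hlampos.le
  have hnil : ‖1 / lam‖ = 1 / lam := Real.norm_of_nonneg (by positivity)
  have nA : ‖(k + 1) • (p - q)‖ = (1 / lam) * ‖p - q‖ := by
    rw [h2, norm_smul, hnil]
  have nB : ‖p - R p‖ = (1 / lam) * ‖p - Rl p‖ := by
    rw [h3, norm_smul, hnl]; field_simp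
  have nC : ‖q - S q‖ = (1 / lam) * ‖q - Sl q‖ := by
    rw [h4, norm_smul, hnl]; field_simp
  have nD : ‖(k + 1) • (p - q) + q - S q‖ = (1 / lam) * ‖p - Sl q‖ := by
    rw [h5, norm_smul, hnil]
  have nE : ‖(k + 1) • (q - p) + p - R p‖ = (1 / lam) * ‖q - Rl p‖ := by
    rw [h6, norm_smul, hnil]
  have harg : ‖(k + 1) • (p - q)‖ ^ b * ‖p - R p‖ ^ a * ‖q - S q‖ ^ c *
      ((1 / 2) * (‖(k + 1) • (p - q) + q - S q‖ + ‖(k + 1) • (q - p) + p - R p‖)) ^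
        (1 - a - b - c) =
      (1 / lam) * (‖p - q‖ ^ b * ‖p - Rl p‖ ^ a * ‖q - Sl q‖ ^ c *
        ((1 / 2) * (‖p - Sl q‖ + ‖q - Rl p‖)) ^ (1 - a - b - c)) := by
    rw [nA, nB, nC, nD, nE]
    have hhalf : (1 / 2 : ℝ) * ((1 / lam) * ‖p - Sl q‖ + (1 / lam) * ‖q - Rl p‖) =
        (1 / lam) * ((1 / 2) * (‖p - Sl q‖ + ‖q - Rl p‖)) := by ring
    rw [hhalf]
    exact aux_rpow (1 / lam) _ _ _ _ a b c (by positivity) (norm_nonneg _)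
      (norm_nonneg _) (norm_nonneg _) (by positivity)
  have key := hRS p q hRne hSne
  rw [harg] at key
  rw [h1, norm_smul, hnl]
  exact mul_le_mul_of_nonneg_left key hlampos.le
end

section
/- Let C, Q be nonempty closed convex subsets of a real Hilbert space H and T : H → H a nonzero bounded linear operator, with the solution set K = {x ∈ C : Tx ∈ Q} nonempty. Then x ∈ C satisfies Tx ∈ Q if and only if x is a fixed point of the map x ↦ P_C( x − (1/‖T‖²) T*(I − P_Q)(Tx) ). -/
open scoped RealInnerProductSpace

private lemma proj_vi {H : Type*} [NormedAddCommGroup H] [InnerProductSpace ℝ H]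
    (Q : Set H) (hQne : Q.Nonempty) (hQconv : Convex ℝ Q) (PQ : H → H)
    (hPQ : ∀ x, PQ x ∈ Q ∧ ∀ y ∈ Q, ‖x - PQ x‖ ≤ ‖x - y‖) (x : H) :
    ∀ w ∈ Q, ⟪x - PQ x, w - PQ x⟫ ≤ 0 := by
  have hne : Nonempty Q := hQne.to_subtype
  have h1 : ‖x - PQ x‖ = ⨅ w : Q, ‖x - (w : H)‖ := by
    refine le_antisymm (le_ciInf fun w => (hPQ x).2 w w.2) (ciInf_le ?_ (⟨PQ x, (hPQ x).1⟩ : Q))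
    refine ⟨0, ?_⟩
    rintro r ⟨w, rfl⟩
    exact norm_nonneg _
  exact (norm_eq_iInf_iff_real_inner_le_zero hQconv (hPQ x).1).mp h1

private lemma proj_fix {H : Type*} [NormedAddCommGroup H] [InnerProductSpace ℝ H]
    (Q : Set H) (PQ : H → H)
    (hPQ : ∀ x, PQ x ∈ Q ∧ ∀ y ∈ Q, ‖x - PQ x‖ ≤ ‖x - y‖) {x : H} (hx : x ∈ Q) :
    PQ x = x := by
  have h := (hPQ x).2 x hx
  simp only [sub_self, norm_zero] at h
  have := norm_le_zero_iff.mp h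
  have := sub_eq_zero.mp this
  exact this.symm

theorem stmt_15 {H : Type*} [NormedAddCommGroup H] [InnerProductSpace ℝ H] [CompleteSpace H]
    (C Q : Set H) (hCne : C.Nonempty) (hCclosed : IsClosed C) (hCconv : Convex ℝ C)
    (hQne : Q.Nonempty) (hQclosed : IsClosed Q) (hQconv : Convex ℝ Q)
    (T : H →L[ℝ] H) (hT : T ≠ 0)
    (PC PQ : H → H)
    (hPC : ∀ x, PC x ∈ C ∧ ∀ y ∈ C, ‖x - PC x‖ ≤ ‖x - y‖)
    (hPQ : ∀ x, PQ x ∈ Q ∧ ∀ y ∈ Q, ‖x - PQ x‖ ≤ ‖x - y‖)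
    (hK : ∃ x ∈ C, T x ∈ Q) :
    ∀ x ∈ C, (T x ∈ Q ↔
      PC (x - (1 / ‖T‖ ^ 2) • (ContinuousLinearMap.adjoint T) (T x - PQ (T x))) = x) := by
  have hγ : (0:ℝ) < 1 / ‖T‖ ^ 2 := by
    have : (0:ℝ) < ‖T‖ := norm_pos_iff.mpr hT
    positivity
  intro x hx
  constructor
  · intro hTxQ
    rw [proj_fix Q PQ hPQ hTxQ]
    simp only [sub_self, map_zero, smul_zero, sub_zero]
    exact proj_fix C PC hPC hx
  · intro hfix
    obtain ⟨z, hzC, hTzQ⟩ := hK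
    set u := T x - PQ (T x) with hu
    set y := x - (1 / ‖T‖ ^ 2) • (ContinuousLinearMap.adjoint T) u with hy
    -- VI for C at y, using PC y = x
    have hVC : ⟪y - x, z - x⟫ ≤ 0 := by
      have := proj_vi C ⟨x, hx⟩ hCconv PC hPC y z hzC
      rwa [hfix] at this
    have h1 : ⟪u, T z - T x⟫ ≥ 0 := by
      have hyx : y - x = -((1 / ‖T‖ ^ 2) • (ContinuousLinearMap.adjoint T) u) := by
        rw [hy]; abel
      rw [hyx, inner_neg_left, neg_nonpos, real_inner_smul_left] at hVC
      have h2 : (0:ℝ) ≤ ⟪(ContinuousLinearMap.adjoint T) u, z - x⟫ :=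
        nonneg_of_mul_nonneg_right hVC hγ
      rwa [ContinuousLinearMap.adjoint_inner_left, map_sub] at h2
    have h2 : ⟪u, T z - PQ (T x)⟫ ≤ 0 := proj_vi Q hQne hQconv PQ hPQ (T x) (T z) hTzQ
    have h3 : ‖u‖ ^ 2 ≤ 0 := by
      have hsplit : ⟪u, u⟫ = ⟪u, T x - T z⟫ + ⟪u, T z - PQ (T x)⟫ := by
        rw [← inner_add_right]
        congr 1
        rw [hu]; abel
      have h4 : ⟪u, T x - T z⟫ ≤ 0 := by
        have : ⟪u, T x - T z⟫ = -⟪u, T z - T x⟫ := by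
          rw [← inner_neg_right]; congr 1; abel
        rw [this]; linarith
      rw [← real_inner_self_eq_norm_sq, hsplit]
      linarith
    have hu0 : u = 0 := by
      have := sq_nonneg ‖u‖
      have hn : ‖u‖ ^ 2 = 0 := le_antisymm h3 this
      have : ‖u‖ = 0 := by nlinarith [norm_nonneg u]
      exact norm_eq_zero.mp this
    have : T x = PQ (T x) := sub_eq_zero.mp hu0
    rw [this]
    exact (hPQ (T x)).1
end
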